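/- Let X be a δ-hyperbolic graph of uniformly finite valence with base vertex x, and fix R > 2δ. Then there is a constant N (depending only on δ, R and the valence bound of X) such that for every vertex z and every integer n with 0 ≤ n ≤ d(x,z): (i) there is at least one vertex y with d(x,y) = n such that every geodesic from x to z passes within distance R of y (i.e. contains a vertex w with d(w,y) ≤ R); and (ii) the number of such vertices y is at most N. -/

import Mathlib

open SimpleGraph Filter

namespace CF

variable {V : Type*}

/-- A walk in a graph is a geodesic if its length realizes the graph distance
between its endpoints. -/
def IsGeodesic (G : SimpleGraph V) {u v : V} (p : G.Walk u v) : Prop :=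
  p.length = G.dist u v

/-- `G` is δ-hyperbolic: every geodesic triangle is δ-thin, i.e. each side lies
in the δ-neighborhood of the union of the other two sides. -/
def IsDeltaHyperbolic (G : SimpleGraph V) (δ : ℝ) : Prop :=
  ∀ ⦃a b c : V⦄ (p : G.Walk a b) (q : G.Walk b c) (r : G.Walk a c),
    IsGeodesic G p → IsGeodesic G q → IsGeodesic G r →
      (∀ z ∈ p.support, ∃ w, (w ∈ q.support ∨ w ∈ r.support) ∧ (G.dist z w : ℝ) ≤ δ) ∧
      (∀ z ∈ q.support, ∃ w, (w ∈ p.support ∨ w ∈ r.support) ∧ (G.dist z w : ℝ) ≤ δ) ∧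
      (∀ z ∈ r.support, ∃ w, (w ∈ p.support ∨ w ∈ q.support) ∧ (G.dist z w : ℝ) ≤ δ)

/-- `G` has uniformly finite valence. -/
def UnifFiniteValence (G : SimpleGraph V) : Prop :=
  ∃ D : ℕ, ∀ v : V, (G.neighborSet v).Finite ∧ (G.neighborSet v).ncard ≤ D

/-- The automorphism group of `G` acts transitively on vertices. -/
def VertexTransitive (G : SimpleGraph V) : Prop :=
  ∀ u v : V, ∃ φ : G ≃g G, φ u = v

/-- A δ-hyperbolike graph: connected, of uniformly finite valence, δ-hyperbolic
(with δ ≥ 0), and vertex-transitive. -/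
def Hyperbolike (G : SimpleGraph V) (δ : ℝ) : Prop :=
  G.Connected ∧ UnifFiniteValence G ∧ 0 ≤ δ ∧ IsDeltaHyperbolic G δ ∧ VertexTransitive G

/-- The ball of radius `n` about `x` (as a vertex set). -/
def ball (G : SimpleGraph V) (x : V) (n : ℕ) : Set V := {y | G.dist x y ≤ n}

/-- A formal power series over ℝ is rational if `q·P = p` for polynomials `p`, `q`
with `q(0) ≠ 0`. -/
def IsRationalPS (P : PowerSeries ℝ) : Prop :=
  ∃ p q : Polynomial ℝ, q.coeff 0 ≠ 0 ∧ (q : PowerSeries ℝ) * P = (p : PowerSeries ℝ)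

/-- Two geodesics starting at the same point `T`-synchronously fellow travel:
`d(γ(ℓ−i), γ′(ℓ′−i)) ≤ T` for all `0 ≤ i ≤ min(ℓ,ℓ′)`. -/
def SyncFellowTravel (G : SimpleGraph V) (T : ℝ) {x y z : V}
    (p : G.Walk x y) (q : G.Walk x z) : Prop :=
  ∀ i : ℕ, i ≤ min p.length q.length →
    (G.dist (p.getVert (p.length - i)) (q.getVert (q.length - i)) : ℝ) ≤ T

/-- `z` is a competitor of `y` (with respect to the base point `x`):
`z ∈ B_{2δ+1}(y)`, `d(x,z) ≤ d(x,y)`, and some geodesic from `x` to `z`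
`(2δ+1)`-synchronously fellow travels every geodesic from `x` to `y`. -/
def Competitor (G : SimpleGraph V) (δ : ℝ) (x y z : V) : Prop :=
  (G.dist y z : ℝ) ≤ 2*δ+1 ∧ G.dist x z ≤ G.dist x y ∧
  ∃ p : G.Walk x z, IsGeodesic G p ∧
    ∀ q : G.Walk x y, IsGeodesic G q → SyncFellowTravel G (2*δ+1) p q

/-- `F` is a tournament at `y` (with base point `x`); only the values of `F` on
the ball `B_{2δ+1}(y)` are constrained. -/
def Tournament (G : SimpleGraph V) (δ : ℝ) (x y : V) (F : V → ℤ) : Prop :=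
  (∀ z : V, (G.dist y z : ℝ) ≤ 2*δ+1 →
    (G.dist x z : ℤ) - (G.dist x y : ℤ) ≤ F z ∧ F z ≤ (G.dist y z : ℤ)) ∧
  (∀ z : V, Competitor G δ x y z → (G.dist x z : ℤ) = (G.dist x y : ℤ) + F z)

/-- Tournaments `(y,F)` and `(y',F')` have the same type: some automorphism `φ`
carries `y` to `y'` with `F = F' ∘ φ` (on the ball `B_{2δ+1}(y)`). -/
def SameTournamentType (G : SimpleGraph V) (δ : ℝ) (y y' : V) (F F' : V → ℤ) : Prop :=
  ∃ φ : G ≃g G, φ y = y' ∧ ∀ z : V, (G.dist y z : ℝ) ≤ 2*δ+1 → F z = F' (φ z)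

/-- The cone of `y` with respect to the base point `x`. -/
def cone (G : SimpleGraph V) (x y : V) : Set V :=
  {z | G.dist x z = G.dist x y + G.dist y z}

/-- There is a quasi-isometry from the vertices of `G` (with the path metric) to ℝ. -/
def QuasiIsometricToReal (G : SimpleGraph V) : Prop :=
  ∃ (f : V → ℝ) (C : ℝ), 1 ≤ C ∧
    (∀ u v : V, (G.dist u v : ℝ)/C - C ≤ |f u - f v| ∧ |f u - f v| ≤ C * G.dist u v + C) ∧
    (∀ r : ℝ, ∃ v : V, |r - f v| ≤ C)

/-- `G` is nonelementary: infinitely many vertices and not quasi-isometric to ℝ. -/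
def Nonelementary (G : SimpleGraph V) : Prop :=
  Infinite V ∧ ¬ QuasiIsometricToReal G

/-- `ω` is an opposite series of the power series with (positive) coefficients `a`:
the polynomials `Xₙ(P)(s) = Σ_{k≤n} (a_{n-k}/aₙ) s^k` accumulate coefficientwise at `ω`
along some strictly increasing sequence of indices. -/
def OppositeSeries (a : ℕ → ℝ) (ω : ℕ → ℝ) : Prop :=
  ∃ φ : ℕ → ℕ, StrictMono φ ∧
    ∀ k : ℕ, Tendsto (fun j => a (φ j - k) / a (φ j)) atTop (nhds (ω k))

end CF

namespace CF

universe u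

variable {W : Type*} {G : SimpleGraph W}

lemma exists_walk_getVert {u v : W} (p : G.Walk u v) (i : ℕ) :
    ∃ q : G.Walk u (p.getVert i), q.length ≤ i := by
  induction p generalizing i with
  | nil => exact ⟨Walk.nil, Nat.zero_le i⟩
  | cons h p' ih =>
    cases i with
    | zero => exact ⟨Walk.nil, le_refl 0⟩
    | succ i' =>
      obtain ⟨q, hq⟩ := ih i'
      exact ⟨Walk.cons h q, by simpa using Nat.succ_le_succ hq⟩

lemma exists_walk_getVert_getVert {u v : W} (p : G.Walk u v) {i j : ℕ} (hij : i ≤ j) :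
    ∃ q : G.Walk (p.getVert i) (p.getVert j), q.length ≤ j - i := by
  induction p generalizing i j with
  | nil => exact ⟨Walk.nil, Nat.zero_le _⟩
  | cons h p' ih =>
    cases i with
    | zero => rw [Walk.getVert_zero, Nat.sub_zero]; exact exists_walk_getVert (Walk.cons h p') j
    | succ i' =>
      cases j with
      | zero => omega
      | succ j' =>
        obtain ⟨q, hq⟩ := ih (Nat.le_of_succ_le_succ hij)
        exact ⟨q, by simpa [Nat.succ_sub_succ] using hq⟩

lemma dist_getVert_le {u v : W} (p : G.Walk u v) (i : ℕ) :
    G.dist u (p.getVert i) ≤ i := by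
  obtain ⟨q, hq⟩ := exists_walk_getVert p i
  exact (SimpleGraph.dist_le q).trans hq

lemma geodesic_dist_getVert {u v : W} {p : G.Walk u v} (hp : p.length = G.dist u v)
    {i : ℕ} (hi : i ≤ p.length) : G.dist u (p.getVert i) = i := by
  have h1 : G.dist u (p.getVert i) ≤ i := dist_getVert_le p i
  obtain ⟨q2, hq2⟩ := exists_walk_getVert_getVert p hi
  have hreach : G.Reachable u (p.getVert i) := ⟨(exists_walk_getVert p i).choose⟩
  obtain ⟨q1, hq1⟩ := hreach.exists_walk_length_eq_dist
  have h2 := SimpleGraph.dist_le (q1.append (q2.copy rfl p.getVert_length))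
  rw [Walk.length_append, Walk.length_copy] at h2
  omega

lemma ball_card {D : ℕ}
    (hD : ∀ v : W, (G.neighborSet v).Finite ∧ (G.neighborSet v).ncard ≤ D)
    (hconn : G.Connected) (c : W) (k : ℕ) :
    ∃ s : Finset W, (∀ y, G.dist c y ≤ k → y ∈ s) ∧ s.card ≤ (D + 1) ^ k := by
  classical
  induction k with
  | zero =>
    refine ⟨{c}, fun y hy => ?_, by simp⟩
    have : c = y := (hconn.dist_eq_zero_iff).mp (Nat.le_zero.mp hy)
    simp [this]
  | succ k ih =>
    obtain ⟨s, hs, hcard⟩ := ih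
    refine ⟨s.biUnion (fun u => insert u (hD u).1.toFinset), fun y hy => ?_, ?_⟩
    · by_cases h : G.dist c y ≤ k
      · exact Finset.mem_biUnion.mpr ⟨y, hs y h, Finset.mem_insert_self _ _⟩
      · have hd : G.dist c y = k + 1 := le_antisymm hy (by omega)
        obtain ⟨p, hp⟩ := (hconn c y).exists_walk_length_eq_dist
        rw [hd] at hp
        have hu : G.dist c (p.getVert k) ≤ k := dist_getVert_le p k
        have hadj : G.Adj (p.getVert k) y := by
          have h' := p.adj_getVert_succ (i := k) (by omega)
          rwa [show p.getVert (k + 1) = y by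
            rw [show k + 1 = p.length by omega]; exact p.getVert_length] at h'
        exact Finset.mem_biUnion.mpr ⟨_, hs _ hu,
          Finset.mem_insert.mpr (Or.inr ((hD _).1.mem_toFinset.mpr hadj))⟩
    · calc (s.biUnion (fun u => insert u (hD u).1.toFinset)).card
          ≤ ∑ u ∈ s, (insert u (hD u).1.toFinset).card := Finset.card_biUnion_le
        _ ≤ ∑ _u ∈ s, (D + 1) := by
            refine Finset.sum_le_sum fun u _ => ?_
            have : (hD u).1.toFinset.card ≤ D := by
              rw [← Set.ncard_eq_toFinset_card _ (hD u).1]; exact (hD u).2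
            have h2 := Finset.card_insert_le u (hD u).1.toFinset
            omega
        _ = s.card * (D + 1) := by simp [Finset.sum_const, mul_comm]
        _ ≤ (D + 1) ^ k * (D + 1) := Nat.mul_le_mul_right _ hcard
        _ = (D + 1) ^ (k + 1) := (pow_succ _ _).symm


/-- Shadows: in a δ-hyperbolic graph of valence at most `D`, for
`R > 2δ`, there is `N = N(δ,R,D)` such that for any vertices `x`, `z` and any
`0 ≤ n ≤ d(x,z)` there is at least one, and there are at most `N`, vertices `y`
with `d(x,y) = n` such that every geodesic from `x` to `z` passes within `R` of `y`. -/
theorem shadows_cover {δ R : ℝ} (hδ : 0 ≤ δ) (hR : 2*δ < R) (D : ℕ) :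
    ∃ N : ℕ, ∀ (V : Type u) (G : SimpleGraph V), G.Connected →
      (∀ v : V, (G.neighborSet v).Finite ∧ (G.neighborSet v).ncard ≤ D) →
      IsDeltaHyperbolic G δ →
      ∀ (x z : V) (n : ℕ), n ≤ G.dist x z →
        (∃ y : V, G.dist x y = n ∧ ∀ p : G.Walk x z, IsGeodesic G p →
            ∃ w ∈ p.support, (G.dist w y : ℝ) ≤ R) ∧
        Nat.card {y : V | G.dist x y = n ∧ ∀ p : G.Walk x z, IsGeodesic G p →
            ∃ w ∈ p.support, (G.dist w y : ℝ) ≤ R} ≤ N := by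
  refine ⟨(D + 1) ^ ⌈2 * R⌉₊, ?_⟩
  intro V G hconn hD hhyp x z n hn
  obtain ⟨p₀, hp₀⟩ := (hconn x z).exists_walk_length_eq_dist
  have hn' : n ≤ p₀.length := by omega
  set c := p₀.getVert n with hc
  have hxc : G.dist x c = n := geodesic_dist_getVert hp₀ hn'
  have hδR : δ ≤ R := by linarith
  constructor
  · refine ⟨c, hxc, fun p hp => ?_⟩
    have hnil : IsGeodesic G (Walk.nil : G.Walk z z) := by simp [IsGeodesic, SimpleGraph.dist_self]
    obtain ⟨h1, -, -⟩ := hhyp p₀ (Walk.nil : G.Walk z z) p hp₀ hnil hp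
    have hcmem : c ∈ p₀.support := Walk.mem_support_iff_exists_getVert.mpr ⟨n, rfl, hn'⟩
    obtain ⟨w, hw, hwδ⟩ := h1 c hcmem
    rcases hw with hw | hw
    · refine ⟨z, p.end_mem_support, ?_⟩
      have hwz : w = z := by simpa [Walk.support_nil] using hw
      rw [hwz] at hwδ
      rw [SimpleGraph.dist_comm]
      linarith
    · exact ⟨w, hw, by rw [SimpleGraph.dist_comm]; linarith⟩
  · obtain ⟨s, hs, hcard⟩ := ball_card hD hconn c ⌈2 * R⌉₊
    have hsub : {y : V | G.dist x y = n ∧ ∀ p : G.Walk x z, IsGeodesic G p →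
        ∃ w ∈ p.support, (G.dist w y : ℝ) ≤ R} ⊆ ↑s := by
      rintro y ⟨hy1, hy2⟩
      obtain ⟨w, hwmem, hwR⟩ := hy2 p₀ hp₀
      obtain ⟨k, hk, hkle⟩ := Walk.mem_support_iff_exists_getVert.mp hwmem
      have hxw : G.dist x w = k := by rw [← hk]; exact geodesic_dist_getVert hp₀ hkle
      have ht1 : G.dist x w ≤ G.dist x y + G.dist y w := hconn.dist_triangle
      have ht2 : G.dist x y ≤ G.dist x w + G.dist w y := hconn.dist_triangle
      have hcw : (G.dist c w : ℝ) ≤ R := by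
        rcases le_total k n with hkn | hnk
        · obtain ⟨q, hq⟩ := exists_walk_getVert_getVert p₀ hkn
          have h3 : G.dist (p₀.getVert k) (p₀.getVert n) ≤ n - k :=
            (SimpleGraph.dist_le q).trans hq
          rw [hk] at h3
          have hnat : G.dist c w ≤ n - k := by rw [hc, SimpleGraph.dist_comm]; exact h3
          rw [hy1, hxw] at ht2
          have hcast : ((G.dist c w : ℕ) : ℝ) ≤ ((n - k : ℕ) : ℝ) := Nat.cast_le.mpr hnat
          rw [Nat.cast_sub hkn] at hcast
          have hcast2 : (n : ℝ) ≤ (k : ℝ) + (G.dist w y : ℝ) := by exact_mod_cast ht2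
          linarith
        · obtain ⟨q, hq⟩ := exists_walk_getVert_getVert p₀ hnk
          have h3 : G.dist (p₀.getVert n) (p₀.getVert k) ≤ k - n :=
            (SimpleGraph.dist_le q).trans hq
          rw [hk] at h3
          have hnat : G.dist c w ≤ k - n := by rw [hc]; exact h3
          rw [hy1, hxw] at ht1
          have hcast : ((G.dist c w : ℕ) : ℝ) ≤ ((k - n : ℕ) : ℝ) := Nat.cast_le.mpr hnat
          rw [Nat.cast_sub hnk] at hcast
          have hcast2 : (k : ℝ) ≤ (n : ℝ) + (G.dist y w : ℝ) := by exact_mod_cast ht1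
          rw [SimpleGraph.dist_comm] at hcast2
          linarith
      have htri : G.dist c y ≤ G.dist c w + G.dist w y := hconn.dist_triangle
      have hcy : (G.dist c y : ℝ) ≤ 2 * R := by
        have : ((G.dist c y : ℕ) : ℝ) ≤ (G.dist c w : ℝ) + (G.dist w y : ℝ) := by
          exact_mod_cast htri
        linarith
      have hmem : G.dist c y ≤ ⌈2 * R⌉₊ := by
        have h4 : (G.dist c y : ℝ) ≤ ((⌈2 * R⌉₊ : ℕ) : ℝ) := hcy.trans (Nat.le_ceil _)
        exact_mod_cast h4
      exact Finset.mem_coe.mpr (hs y hmem)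
    rw [Nat.card_coe_set_eq]
    calc ({y : V | G.dist x y = n ∧ ∀ p : G.Walk x z, IsGeodesic G p →
            ∃ w ∈ p.support, (G.dist w y : ℝ) ≤ R}).ncard
        ≤ ((s : Set V)).ncard := Set.ncard_le_ncard hsub s.finite_toSet
      _ = s.card := Set.ncard_coe_finset s
      _ ≤ (D + 1) ^ ⌈2 * R⌉₊ := hcard


end CF
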